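/- The auxiliary map Φ̃ : Ω̄ → ℝ² defined by Φ̃(θ¹,θ²) := ( Φ₁(θ¹), (1 − θ¹/π) Φ₂(0,θ²) + (θ¹/π) Φ₂(π,θ²) ) is continuous and injective on the closed rectangle Ω̄ = [0,π] × [0,2π]. -/
import Mathlib


open Real Set MeasureTheory intervalIntegral

/-- The auxiliary map
`Φ̃(θ¹,θ²) := ( Φ₁(θ¹), (1 − θ¹/π) Φ₂(0,θ²) + (θ¹/π) Φ₂(π,θ²) )`
is continuous and injective on the closed rectangle `Ω̄ = [0,π] × [0,2π]`. -/
theorem stmt_5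
    (lam : ℝ → ℝ → ℝ)
    (hcont : ContinuousOn (fun p : ℝ × ℝ => lam p.1 p.2)
      (Set.Icc (0:ℝ) π ×ˢ Set.Icc (0:ℝ) (2*π)))
    (hpos : ∀ p ∈ Set.Icc (0:ℝ) π ×ˢ Set.Icc (0:ℝ) (2*π), 0 < lam p.1 p.2)
    (hnorm : (∫ σ in (0:ℝ)..π, ∫ τ in (0:ℝ)..(2*π), lam σ τ * Real.sin σ) = 4*π)
    (Φ₁ : ℝ → ℝ)
    (hΦ₁ : ∀ θ, Φ₁ θ = Real.arccos
      (1 - (1/(2*π)) * ∫ σ in (0:ℝ)..θ, ∫ τ in (0:ℝ)..(2*π), lam σ τ * Real.sin σ))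
    (Φ₂ : ℝ → ℝ → ℝ)
    (hΦ₂ : ∀ θ1 θ2, Φ₂ θ1 θ2 =
      2*π * (∫ τ in (0:ℝ)..θ2, lam θ1 τ) / ∫ τ in (0:ℝ)..(2*π), lam θ1 τ)
    (Φt : ℝ × ℝ → ℝ × ℝ)
    (hΦt : ∀ p : ℝ × ℝ, Φt p =
      (Φ₁ p.1, (1 - p.1/π) * Φ₂ 0 p.2 + (p.1/π) * Φ₂ π p.2)) :
    ContinuousOn Φt (Set.Icc (0:ℝ) π ×ˢ Set.Icc (0:ℝ) (2*π)) ∧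
    Set.InjOn Φt (Set.Icc (0:ℝ) π ×ˢ Set.Icc (0:ℝ) (2*π)) := by
  have hπ : (0:ℝ) < π := Real.pi_pos
  have h2π : (0:ℝ) < 2*π := by linarith
  -- clamped versions of the coordinates
  set c1 : ℝ → ℝ := fun x => min (max x 0) π with hc1def
  set c2 : ℝ → ℝ := fun y => min (max y 0) (2*π) with hc2def
  have hc1mem : ∀ x, c1 x ∈ Set.Icc (0:ℝ) π :=
    fun x => ⟨le_min (le_max_right _ _) hπ.le, min_le_right _ _⟩
  have hc2mem : ∀ y, c2 y ∈ Set.Icc (0:ℝ) (2*π) :=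
    fun y => ⟨le_min (le_max_right _ _) h2π.le, min_le_right _ _⟩
  have hc1fix : ∀ x ∈ Set.Icc (0:ℝ) π, c1 x = x := by
    intro x hx
    simp only [hc1def, max_eq_left hx.1, min_eq_left hx.2]
  have hc2fix : ∀ y ∈ Set.Icc (0:ℝ) (2*π), c2 y = y := by
    intro y hy
    simp only [hc2def, max_eq_left hy.1, min_eq_left hy.2]
  have hc1c : Continuous c1 := (continuous_id.max continuous_const).min continuous_const
  have hc2c : Continuous c2 := (continuous_id.max continuous_const).min continuous_const
  -- continuous positive extension of lam
  set L : ℝ → ℝ → ℝ := fun x y => lam (c1 x) (c2 y) with hLdef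
  have hLc : Continuous (fun p : ℝ × ℝ => L p.1 p.2) := by
    have : Continuous (fun p : ℝ × ℝ => (c1 p.1, c2 p.2)) :=
      (hc1c.comp continuous_fst).prodMk (hc2c.comp continuous_snd)
    exact hcont.comp_continuous this (fun p => ⟨hc1mem _, hc2mem _⟩)
  have hLpos : ∀ x y, 0 < L x y := fun x y => hpos (c1 x, c2 y) ⟨hc1mem x, hc2mem y⟩
  have hLeq : ∀ x ∈ Set.Icc (0:ℝ) π, ∀ y ∈ Set.Icc (0:ℝ) (2*π), L x y = lam x y := by
    intro x hx y hy; simp only [hLdef, hc1fix x hx, hc2fix y hy]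
  have hLslice : ∀ x : ℝ, Continuous (fun y => L x y) :=
    fun x => hLc.comp (continuous_const.prodMk continuous_id)
  -- inner integral
  set g : ℝ → ℝ := fun σ => ∫ τ in (0:ℝ)..(2*π), L σ τ with hgdef
  have hgc : Continuous g :=
    intervalIntegral.continuous_parametric_intervalIntegral_of_continuous' (f := L)
      (μ := volume) hLc 0 (2*π)
  have hgpos : ∀ σ, 0 < g σ := fun σ =>
    intervalIntegral_pos_of_pos ((hLslice σ).intervalIntegrable _ _) (fun τ => hLpos σ τ) h2π
  set G : ℝ → ℝ := fun σ => g σ * Real.sin σ with hGdef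
  have hGc : Continuous G := hgc.mul Real.continuous_sin
  set F : ℝ → ℝ := fun θ => ∫ σ in (0:ℝ)..θ, G σ with hFdef
  have hFc : Continuous F :=
    intervalIntegral.continuous_primitive (fun a b => hGc.intervalIntegrable a b) 0
  -- F agrees with the double integral on [0, π]
  have hinner : ∀ σ ∈ Set.Icc (0:ℝ) π,
      (∫ τ in (0:ℝ)..(2*π), lam σ τ * Real.sin σ) = G σ := by
    intro σ hσ
    have h1 : (∫ τ in (0:ℝ)..(2*π), lam σ τ * Real.sin σ)
        = (∫ τ in (0:ℝ)..(2*π), lam σ τ) * Real.sin σ :=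
      intervalIntegral.integral_mul_const _ _
    have h2 : (∫ τ in (0:ℝ)..(2*π), lam σ τ) = g σ := by
      refine intervalIntegral.integral_congr fun τ hτ => ?_
      rw [Set.uIcc_of_le h2π.le] at hτ
      exact (hLeq σ hσ τ hτ).symm
    rw [h1, h2]
  have hFeq : ∀ θ ∈ Set.Icc (0:ℝ) π,
      (∫ σ in (0:ℝ)..θ, ∫ τ in (0:ℝ)..(2*π), lam σ τ * Real.sin σ) = F θ := by
    intro θ hθ
    refine intervalIntegral.integral_congr fun σ hσ => ?_
    rw [Set.uIcc_of_le hθ.1] at hσ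
    exact hinner σ ⟨hσ.1, hσ.2.trans hθ.2⟩
  have hF0 : F 0 = 0 := intervalIntegral.integral_same
  have hFπ : F π = 4*π := by rw [← hFeq π ⟨hπ.le, le_refl π⟩]; exact hnorm
  -- F is strictly monotone on [0, π]
  have hFmono : StrictMonoOn F (Set.Icc (0:ℝ) π) := by
    intro a ha b hb hab
    have hadd : F a + ∫ σ in a..b, G σ = F b :=
      intervalIntegral.integral_add_adjacent_intervals
        (hGc.intervalIntegrable _ _) (hGc.intervalIntegrable _ _)
    have hposint : 0 < ∫ σ in a..b, G σ := by
      refine intervalIntegral_pos_of_pos_on (hGc.intervalIntegrable _ _) (fun σ hσ => ?_) hab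
      have hs : 0 < Real.sin σ :=
        Real.sin_pos_of_pos_of_lt_pi (lt_of_le_of_lt ha.1 hσ.1) (lt_of_lt_of_le hσ.2 hb.2)
      exact mul_pos (hgpos σ) hs
    linarith
  have hFrange : ∀ θ ∈ Set.Icc (0:ℝ) π, F θ ∈ Set.Icc (0:ℝ) (4*π) := by
    intro θ hθ
    constructor
    · rw [← hF0]
      exact hFmono.monotoneOn ⟨le_refl _, hπ.le⟩ hθ hθ.1
    · rw [← hFπ]
      exact hFmono.monotoneOn hθ ⟨hπ.le, le_refl _⟩ hθ.2
  have hargmem : ∀ θ ∈ Set.Icc (0:ℝ) π,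
      (1 - (1/(2*π)) * F θ) ∈ Set.Icc (-1:ℝ) 1 := by
    intro θ hθ
    obtain ⟨h1, h2⟩ := hFrange θ hθ
    have e : (1/(2*π)) * F θ = F θ / (2*π) := by ring
    constructor
    · rw [e]
      have : F θ / (2*π) ≤ 2 := by
        rw [div_le_iff₀ h2π]; linarith
      linarith
    · rw [e]
      have : 0 ≤ F θ / (2*π) := div_nonneg h1 h2π.le
      linarith
  have hΦ₁eq : ∀ θ ∈ Set.Icc (0:ℝ) π, Φ₁ θ = Real.arccos (1 - (1/(2*π)) * F θ) := by
    intro θ hθ; rw [hΦ₁, hFeq θ hθ]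
  -- second coordinate: primitives at the two ends
  set A : ℝ → ℝ := fun t => ∫ τ in (0:ℝ)..t, L 0 τ with hAdef
  set B : ℝ → ℝ := fun t => ∫ τ in (0:ℝ)..t, L π τ with hBdef
  have hAc : Continuous A :=
    intervalIntegral.continuous_primitive (fun a b => (hLslice 0).intervalIntegrable a b) 0
  have hBc : Continuous B :=
    intervalIntegral.continuous_primitive (fun a b => (hLslice π).intervalIntegrable a b) 0
  have hAmono : StrictMono A := by
    intro a b hab
    have hadd : A a + ∫ τ in a..b, L 0 τ = A b :=
      intervalIntegral.integral_add_adjacent_intervals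
        ((hLslice 0).intervalIntegrable _ _) ((hLslice 0).intervalIntegrable _ _)
    have : 0 < ∫ τ in a..b, L 0 τ :=
      intervalIntegral_pos_of_pos ((hLslice 0).intervalIntegrable _ _) (fun τ => hLpos 0 τ) hab
    linarith
  have hBmono : StrictMono B := by
    intro a b hab
    have hadd : B a + ∫ τ in a..b, L π τ = B b :=
      intervalIntegral.integral_add_adjacent_intervals
        ((hLslice π).intervalIntegrable _ _) ((hLslice π).intervalIntegrable _ _)
    have : 0 < ∫ τ in a..b, L π τ :=
      intervalIntegral_pos_of_pos ((hLslice π).intervalIntegrable _ _) (fun τ => hLpos π τ) hab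
    linarith
  have hA0 : A 0 = 0 := intervalIntegral.integral_same
  have hB0 : B 0 = 0 := intervalIntegral.integral_same
  have hA2π : 0 < A (2*π) := by rw [← hA0]; exact hAmono h2π
  have hB2π : 0 < B (2*π) := by rw [← hB0]; exact hBmono h2π
  have hmemπ : (π:ℝ) ∈ Set.Icc (0:ℝ) π := ⟨hπ.le, le_refl _⟩
  have hmem0 : (0:ℝ) ∈ Set.Icc (0:ℝ) π := ⟨le_refl _, hπ.le⟩
  have hΦ₂0 : ∀ t ∈ Set.Icc (0:ℝ) (2*π), Φ₂ 0 t = 2*π * A t / A (2*π) := by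
    intro t ht
    have e : ∀ s ∈ Set.Icc (0:ℝ) (2*π), (∫ τ in (0:ℝ)..s, lam 0 τ) = A s := by
      intro s hs
      refine intervalIntegral.integral_congr fun τ hτ => ?_
      rw [Set.uIcc_of_le hs.1] at hτ
      exact (hLeq 0 hmem0 τ ⟨hτ.1, hτ.2.trans hs.2⟩).symm
    rw [hΦ₂, e t ht, e (2*π) ⟨h2π.le, le_refl _⟩]
  have hΦ₂π : ∀ t ∈ Set.Icc (0:ℝ) (2*π), Φ₂ π t = 2*π * B t / B (2*π) := by
    intro t ht
    have e : ∀ s ∈ Set.Icc (0:ℝ) (2*π), (∫ τ in (0:ℝ)..s, lam π τ) = B s := by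
      intro s hs
      refine intervalIntegral.integral_congr fun τ hτ => ?_
      rw [Set.uIcc_of_le hs.1] at hτ
      exact (hLeq π hmemπ τ ⟨hτ.1, hτ.2.trans hs.2⟩).symm
    rw [hΦ₂, e t ht, e (2*π) ⟨h2π.le, le_refl _⟩]
  -- the continuous model map
  set Ψ : ℝ × ℝ → ℝ × ℝ := fun p =>
      (Real.arccos (1 - (1/(2*π)) * F p.1),
        (1 - p.1/π) * (2*π * A p.2 / A (2*π)) + (p.1/π) * (2*π * B p.2 / B (2*π)))
    with hΨdef
  have hΨc : Continuous Ψ := by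
    apply Continuous.prodMk
    · exact Real.continuous_arccos.comp
        (continuous_const.sub (continuous_const.mul (hFc.comp continuous_fst)))
    · apply Continuous.add
      · exact (continuous_const.sub (continuous_fst.div_const π)).mul
          ((continuous_const.mul (hAc.comp continuous_snd)).div_const _)
      · exact (continuous_fst.div_const π).mul
          ((continuous_const.mul (hBc.comp continuous_snd)).div_const _)
  have hagree : Set.EqOn Φt Ψ (Set.Icc (0:ℝ) π ×ˢ Set.Icc (0:ℝ) (2*π)) := by
    intro p hp
    rw [Set.mem_prod] at hp
    rw [hΦt, hΨdef]
    dsimp only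
    rw [hΦ₁eq p.1 hp.1, hΦ₂0 p.2 hp.2, hΦ₂π p.2 hp.2]
  constructor
  · exact (hΨc.continuousOn).congr hagree
  · -- injectivity
    intro p hp q hq heq
    rw [Set.mem_prod] at hp hq
    rw [hagree (Set.mem_prod.2 hp), hagree (Set.mem_prod.2 hq), hΨdef, Prod.mk.injEq] at heq
    obtain ⟨h1, h2⟩ := heq
    -- first coordinates
    have hx1 : p.1 = q.1 := by
      have harg := Real.arccos_injOn (hargmem p.1 hp.1) (hargmem q.1 hq.1) h1
      have hFeq' : F p.1 = F q.1 := by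
        have h2π' : (1:ℝ)/(2*π) ≠ 0 := by positivity
        field_simp at harg
        linarith
      exact hFmono.injOn hp.1 hq.1 hFeq'
    -- second coordinates
    rw [hx1] at h2
    set c : ℝ := q.1 / π with hcdef
    have hc0 : 0 ≤ c := div_nonneg hq.1.1 hπ.le
    have hc1' : c ≤ 1 := (div_le_one hπ).2 hq.1.2
    -- strict monotonicity of the convex combination in the second variable
    have key : ∀ s t : ℝ, s < t →
        (1 - c) * (2*π * A s / A (2*π)) + c * (2*π * B s / B (2*π)) <
        (1 - c) * (2*π * A t / A (2*π)) + c * (2*π * B t / B (2*π)) := by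
      intro s t hst
      have hA' : 2*π * A s / A (2*π) < 2*π * A t / A (2*π) := by
        have := hAmono hst
        gcongr
      have hB' : 2*π * B s / B (2*π) < 2*π * B t / B (2*π) := by
        have := hBmono hst
        gcongr
      rcases lt_or_eq_of_le hc1' with hlt | heq1
      · have t1 : (1 - c) * (2*π * A s / A (2*π)) < (1 - c) * (2*π * A t / A (2*π)) :=
          mul_lt_mul_of_pos_left hA' (by linarith)
        have t2 : c * (2*π * B s / B (2*π)) ≤ c * (2*π * B t / B (2*π)) :=
          mul_le_mul_of_nonneg_left hB'.le hc0
        linarith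
      · rw [heq1]
        simp only [sub_self, zero_mul, zero_add, one_mul]
        exact hB'
    rcases lt_trichotomy p.2 q.2 with h | h | h
    · exact absurd h2 (ne_of_lt (key p.2 q.2 h))
    · exact Prod.ext hx1 h
    · exact absurd h2.symm (ne_of_lt (key q.2 p.2 h))
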